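/- Let Z_1, Z_2 be i.i.d. random variables with E[Z] = 0, let U be uniform on [0,1] independent of (Z_1, Z_2), and suppose D = U·Z_1 + (1−U)·Z_2 has the same distribution as Z_1, with E[Z_1^2] < ∞. Then Z_1 = 0 almost surely. -/

import Mathlib

open MeasureTheory ProbabilityTheory

open Filter in
/-- Mutual independence is preserved under a.e. modification of the functions. -/
lemma iIndepFun_ae_congr' {Ω ι : Type*} [MeasurableSpace Ω] {μ : Measure Ω}
    {f g : ι → Ω → ℝ} (h : iIndepFun f μ)
    (hfg : ∀ i, f i =ᵐ[μ] g i) :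
    iIndepFun g μ := by
  classical
  rw [iIndepFun_iff] at h ⊢
  intro s f' H
  have H' : ∀ i ∈ s, ∃ t : Set ℝ, MeasurableSet t ∧ g i ⁻¹' t = f' i := fun i hi => H i hi
  choose! t ht hpre using H'
  have key : ∀ i ∈ s, f' i =ᵐ[μ] f i ⁻¹' t i := by
    intro i hi
    rw [← hpre i hi]
    rw [eventuallyEq_set]
    filter_upwards [hfg i] with ω hω
    simp [Set.mem_preimage, hω]
  have hmem : ∀ᵐ ω ∂μ, ∀ i ∈ s, (ω ∈ f' i ↔ ω ∈ f i ⁻¹' t i) :=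
    (ae_ball_iff s.countable_toSet).2 fun i hi => eventuallyEq_set.1 (key i hi)
  have hinter : μ (⋂ i ∈ s, f' i) = μ (⋂ i ∈ s, f i ⁻¹' t i) := by
    refine measure_congr (eventuallyEq_set.2 ?_)
    filter_upwards [hmem] with ω hω
    simp only [Set.mem_iInter]
    exact ⟨fun h' i hi => (hω i hi).1 (h' i hi), fun h' i hi => (hω i hi).2 (h' i hi)⟩
  rw [hinter, h s (fun i hi => ⟨t i, ht i hi, rfl⟩)]
  exact (Finset.prod_congr rfl fun i hi => (measure_congr (key i hi)).symm)

lemma integral_mul_indep' {Ω : Type*} [MeasurableSpace Ω] {μ : Measure Ω} {X Y : Ω → ℝ}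
    (h : IndepFun X Y μ) (hX : AEStronglyMeasurable X μ) (hY : AEStronglyMeasurable Y μ) :
    ∫ ω, X ω * Y ω ∂μ = (∫ ω, X ω ∂μ) * ∫ ω, Y ω ∂μ :=
  h.integral_fun_mul_eq_mul_integral hX hY

/-- Let `Z₁, Z₂` be i.i.d. with mean `0` and finite second moment,
let `U` be uniform on `[0,1]` independent of `(Z₁, Z₂)`, and suppose
`D = U·Z₁ + (1-U)·Z₂` has the same distribution as `Z₁`. Then `Z₁ = 0` a.s. -/
theorem quicksort_moment_endogeny
    {Ω : Type*} [MeasurableSpace Ω] (P : Measure Ω) [IsProbabilityMeasure P]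
    (U Z₁ Z₂ : Ω → ℝ)
    (hindep : iIndepFun ![U, Z₁, Z₂] P)
    (hU : Measure.map U P = volume.restrict (Set.Icc (0:ℝ) 1))
    (hident : IdentDistrib Z₁ Z₂ P P)
    (hmean : ∫ ω, Z₁ ω ∂P = 0)
    (hL2 : MemLp Z₁ 2 P)
    (hD : IdentDistrib (fun ω => U ω * Z₁ ω + (1 - U ω) * Z₂ ω) Z₁ P P) :
    ∀ᵐ ω ∂P, Z₁ ω = 0 := by
  -- measurability facts
  have aeU : AEMeasurable U P := by
    by_contra h
    rw [Measure.map_of_not_aemeasurable h] at hU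
    have := congrArg (fun m : Measure ℝ => m (Set.Icc (0:ℝ) 1)) hU
    simp [Real.volume_Icc] at this
  have aeZ₁ : AEMeasurable Z₁ P := hL2.aestronglyMeasurable.aemeasurable
  have hL2' : MemLp Z₂ 2 P := hident.memLp_snd hL2
  have aeZ₂ : AEMeasurable Z₂ P := hL2'.aestronglyMeasurable.aemeasurable
  -- U lives in [0,1] a.s.
  have hUIcc : ∀ᵐ ω ∂P, U ω ∈ Set.Icc (0:ℝ) 1 := by
    refine (ae_map_iff aeU measurableSet_Icc).1 ?_
    rw [hU]
    exact ae_restrict_mem measurableSet_Icc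
  -- integrable squares
  have intZ₁sq : Integrable (fun ω => Z₁ ω ^ 2) P := hL2.integrable_sq
  have intZ₂sq : Integrable (fun ω => Z₂ ω ^ 2) P := hL2'.integrable_sq
  have intZ₁ : Integrable Z₁ P := hL2.integrable (by norm_num)
  have intZ₂ : Integrable Z₂ P := hL2'.integrable (by norm_num)
  -- pairwise independences
  have h01 : IndepFun U Z₁ P := hindep.indepFun (show (0:Fin 3) ≠ 1 by decide)
  have h02 : IndepFun U Z₂ P := hindep.indepFun (show (0:Fin 3) ≠ 2 by decide)
  have h12 : IndepFun Z₁ Z₂ P := hindep.indepFun (show (1:Fin 3) ≠ 2 by decide)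
  have intZ₁Z₂ : Integrable (fun ω => Z₁ ω * Z₂ ω) P := h12.integrable_mul intZ₁ intZ₂
  -- the cross independence, via measurable modifications
  have hcross : IndepFun (fun ω => Z₁ ω * Z₂ ω) (fun ω => U ω * (1 - U ω)) P := by
    set U' := aeU.mk U with hU'def
    set Z₁' := aeZ₁.mk Z₁ with hZ₁'def
    set Z₂' := aeZ₂.mk Z₂ with hZ₂'def
    have hind' : iIndepFun ![U', Z₁', Z₂'] P := by
      refine iIndepFun_ae_congr' hindep ?_
      intro i
      fin_cases i
      · exact aeU.ae_eq_mk
      · exact aeZ₁.ae_eq_mk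
      · exact aeZ₂.ae_eq_mk
    have hmeas : ∀ i, Measurable (![U', Z₁', Z₂'] i) := by
      intro i; fin_cases i
      · exact aeU.measurable_mk
      · exact aeZ₁.measurable_mk
      · exact aeZ₂.measurable_mk
    have hp : IndepFun (fun ω => (Z₁' ω, Z₂' ω)) U' P :=
      hind'.indepFun_prodMk hmeas 1 2 0 (by decide) (by decide)
    have h' : IndepFun (fun ω => Z₁' ω * Z₂' ω) (fun ω => U' ω * (1 - U' ω)) P :=
      hp.comp (measurable_fst.mul measurable_snd)
        (measurable_id.mul (measurable_const.sub measurable_id))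
    refine h'.congr ?_ ?_
    · filter_upwards [aeZ₁.ae_eq_mk, aeZ₂.ae_eq_mk] with ω h1 h2
      simp only [hZ₁'def, hZ₂'def]
      rw [← h1, ← h2]
    · filter_upwards [aeU.ae_eq_mk] with ω h1
      simp only [hU'def]
      rw [← h1]
  -- second moments of Z₁, Z₂ agree; mean of Z₂ is 0
  have hZ₂sq : ∫ ω, Z₂ ω ^ 2 ∂P = ∫ ω, Z₁ ω ^ 2 ∂P :=
    ((hident.comp (measurable_id.pow_const 2)).integral_eq).symm
  have hmean₂ : ∫ ω, Z₂ ω ∂P = 0 := hident.integral_eq ▸ hmean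
  -- E[Z₁ Z₂] = 0
  have hEZZ : ∫ ω, Z₁ ω * Z₂ ω ∂P = 0 := by
    rw [integral_mul_indep' h12 intZ₁.aestronglyMeasurable intZ₂.aestronglyMeasurable,
      hmean, hmean₂, mul_zero]
  -- moments of U
  have hEU2 : ∫ ω, U ω ^ 2 ∂P = 1 / 3 := by
    have h1 : ∫ x, x ^ 2 ∂(Measure.map U P) = ∫ ω, U ω ^ 2 ∂P :=
      integral_map aeU (Measurable.aestronglyMeasurable (by fun_prop))
    rw [← h1, hU, integral_Icc_eq_integral_Ioc,
      ← intervalIntegral.integral_of_le zero_le_one]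
    open intervalIntegral in rw [integral_pow]
    norm_num
  have hEU2' : ∫ ω, (1 - U ω) ^ 2 ∂P = 1 / 3 := by
    have h1 : ∫ x, (1 - x) ^ 2 ∂(Measure.map U P) = ∫ ω, (1 - U ω) ^ 2 ∂P :=
      integral_map aeU (Measurable.aestronglyMeasurable (by fun_prop))
    rw [← h1, hU, integral_Icc_eq_integral_Ioc,
      ← intervalIntegral.integral_of_le zero_le_one]
    have h2 : ∫ x in (0:ℝ)..1, (1 - x) ^ 2 = 1 / 3 := by
      rw [intervalIntegral.integral_comp_sub_left (fun x : ℝ => x ^ 2) 1]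
      open intervalIntegral in rw [integral_pow]
      norm_num
    rw [h2]
  -- the three pieces of D²
  set m2 := ∫ ω, Z₁ ω ^ 2 ∂P with hm2
  have hA : ∫ ω, U ω ^ 2 * Z₁ ω ^ 2 ∂P = (1 / 3) * m2 := by
    have hind : IndepFun (fun ω => U ω ^ 2) (fun ω => Z₁ ω ^ 2) P := by
      exact h01.comp (measurable_id.pow_const 2) (measurable_id.pow_const 2)
    rw [integral_mul_indep' hind ((aeU.pow_const 2).aestronglyMeasurable)
      intZ₁sq.aestronglyMeasurable, hEU2]
  have hB : ∫ ω, (1 - U ω) ^ 2 * Z₂ ω ^ 2 ∂P = (1 / 3) * m2 := by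
    have hind : IndepFun (fun ω => (1 - U ω) ^ 2) (fun ω => Z₂ ω ^ 2) P := by
      exact h02.comp ((measurable_const.sub measurable_id).pow_const 2)
        (measurable_id.pow_const 2)
    rw [integral_mul_indep' hind (((aemeasurable_const.sub aeU).pow_const 2).aestronglyMeasurable)
      intZ₂sq.aestronglyMeasurable, hEU2', hZ₂sq]
  have hC : ∫ ω, Z₁ ω * Z₂ ω * (U ω * (1 - U ω)) ∂P = 0 := by
    rw [integral_mul_indep' hcross (aeZ₁.mul aeZ₂).aestronglyMeasurable
      (aeU.mul (aemeasurable_const.sub aeU)).aestronglyMeasurable, hEZZ, zero_mul]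
  -- integrability of the three pieces
  have intA : Integrable (fun ω => U ω ^ 2 * Z₁ ω ^ 2) P := by
    refine Integrable.mono' intZ₁sq
      (((aeU.pow_const 2).mul (aeZ₁.pow_const 2)).aestronglyMeasurable) ?_
    filter_upwards [hUIcc] with ω ⟨h0, h1⟩
    have : U ω ^ 2 ≤ 1 := by nlinarith
    have h2 : (0:ℝ) ≤ U ω ^ 2 := sq_nonneg _
    rw [Real.norm_eq_abs, abs_of_nonneg (by positivity)]
    nlinarith [sq_nonneg (Z₁ ω)]
  have intB : Integrable (fun ω => (1 - U ω) ^ 2 * Z₂ ω ^ 2) P := by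
    refine Integrable.mono' intZ₂sq
      ((((aemeasurable_const.sub aeU).pow_const 2).mul (aeZ₂.pow_const 2)).aestronglyMeasurable) ?_
    filter_upwards [hUIcc] with ω ⟨h0, h1⟩
    have : (1 - U ω) ^ 2 ≤ 1 := by nlinarith
    rw [Real.norm_eq_abs, abs_of_nonneg (by positivity)]
    nlinarith [sq_nonneg (Z₂ ω)]
  have intC : Integrable (fun ω => 2 * (Z₁ ω * Z₂ ω * (U ω * (1 - U ω)))) P := by
    refine Integrable.mono' (intZ₁Z₂.abs.const_mul 2)
      ((((aeZ₁.mul aeZ₂).mul (aeU.mul (aemeasurable_const.sub aeU))).const_mul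
        2).aestronglyMeasurable) ?_
    filter_upwards [hUIcc] with ω ⟨h0, h1⟩
    have h2 : 0 ≤ U ω * (1 - U ω) := mul_nonneg h0 (by linarith)
    have h3 : U ω * (1 - U ω) ≤ 1 := by nlinarith
    rw [Real.norm_eq_abs]
    calc |2 * (Z₁ ω * Z₂ ω * (U ω * (1 - U ω)))|
        = 2 * (|Z₁ ω * Z₂ ω| * (U ω * (1 - U ω))) := by
          rw [abs_mul, abs_mul, abs_of_nonneg h2]; norm_num
      _ ≤ 2 * (|Z₁ ω * Z₂ ω| * 1) := by
          gcongr
      _ = 2 * |Z₁ ω * Z₂ ω| := by ring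
  -- E[D²] = E[Z₁²]
  have hDsq : ∫ ω, (U ω * Z₁ ω + (1 - U ω) * Z₂ ω) ^ 2 ∂P = m2 :=
    (hD.comp (measurable_id.pow_const 2)).integral_eq
  -- expand
  have hexpand : ∫ ω, (U ω * Z₁ ω + (1 - U ω) * Z₂ ω) ^ 2 ∂P
      = (1 / 3) * m2 + (1 / 3) * m2 + 0 := by
    have : (fun ω => (U ω * Z₁ ω + (1 - U ω) * Z₂ ω) ^ 2)
        = fun ω => U ω ^ 2 * Z₁ ω ^ 2 + (1 - U ω) ^ 2 * Z₂ ω ^ 2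
            + 2 * (Z₁ ω * Z₂ ω * (U ω * (1 - U ω))) := by
      funext ω; ring
    have intAB : Integrable
        (fun ω => U ω ^ 2 * Z₁ ω ^ 2 + (1 - U ω) ^ 2 * Z₂ ω ^ 2) P := intA.add intB
    rw [this, integral_add intAB intC, integral_add intA intB, hA, hB,
      integral_const_mul, hC, mul_zero]
  have hm2zero : m2 = 0 := by
    rw [hDsq] at hexpand
    linarith
  -- conclude
  have hnonneg : 0 ≤ᵐ[P] fun ω => Z₁ ω ^ 2 := Filter.Eventually.of_forall fun ω => sq_nonneg _
  have := (integral_eq_zero_iff_of_nonneg_ae hnonneg intZ₁sq).1 hm2zero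
  filter_upwards [this] with ω hω
  have : Z₁ ω ^ 2 = 0 := hω
  exact pow_eq_zero_iff (by norm_num) |>.1 this
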